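/- For every ε > 0 there exists an integer K such that for every integer k ≥ K, every real root λ of p_k satisfying 1 < λ < 2 also satisfies λ < 1 + ε. (In other words, the middle eigenvalue λc of A_k converges to 1 as k → ∞.) -/
import Mathlib

/-- The middle eigenvalue of `A_k` converges to `1` as `k → ∞`: for every `ε > 0` there is an
integer `K` such that for all `k ≥ K`, every real root `λ` of
`p_k(x) = x^3 - k x^2 + (k+1) x - 1` with `1 < λ < 2` satisfies `λ < 1 + ε`. -/
theorem middle_root_tendsto_one (ε : ℝ) (hε : 0 < ε) :
    ∃ K : ℤ, ∀ k : ℤ, K ≤ k → ∀ l : ℝ,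
      l ^ 3 - (k : ℝ) * l ^ 2 + ((k : ℝ) + 1) * l - 1 = 0 →
      1 < l → l < 2 → l < 1 + ε := by
  refine ⟨⌈9 / ε⌉ + 1, fun k hk l heq h1 h2 => ?_⟩
  by_contra h
  push_neg at h
  have hkr : 9 / ε < (k : ℝ) := by
    have h1 := Int.le_ceil (9 / ε)
    have h2 : ((⌈9 / ε⌉ + 1 : ℤ) : ℝ) ≤ (k : ℝ) := by exact_mod_cast hk
    push_cast at h2
    linarith
  have h9 : 9 < (k : ℝ) * ε := (div_lt_iff₀ hε).mp hkr
  have hkpos : (0 : ℝ) < k := lt_trans (by positivity) hkr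
  have hle : ε ≤ l ^ 2 - l := by nlinarith
  nlinarith [mul_le_mul_of_nonneg_left hle (le_of_lt hkpos)]
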